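/- The extremal number for P_6 satisfies: ex(n, P_6) = 2n if n ≡ 0 (mod 5), ex(n, P_6) = 2n - 2 if n ≡ 1 or 4 (mod 5), and ex(n, P_6) = 2n - 3 if n ≡ 2 or 3 (mod 5), for all n ≥ 3. -/

import Mathlib

open SimpleGraph Finset

/-- `G` contains a copy of `H` (an injective graph homomorphism from `H` to `G`). -/
def Contains {V W : Type*} (G : SimpleGraph V) (H : SimpleGraph W) : Prop :=
  ∃ f : H →g G, Function.Injective f

/-- The subgraph of `K_N` formed by the edges of color `i` under the edge coloring `c`. -/
def colorClass {N k : ℕ} (c : Sym2 (Fin N) → Fin k) (i : Fin k) : SimpleGraph (Fin N) :=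
  SimpleGraph.fromRel (fun u v => c s(u, v) = i)

/-- Every 2-coloring of the edges of `K_N` yields a copy of `G₀` in color 0 or `G₁` in color 1. -/
def ramseyProp2 {V W : Type*} (N : ℕ) (G₀ : SimpleGraph V) (G₁ : SimpleGraph W) : Prop :=
  ∀ c : Sym2 (Fin N) → Fin 2,
    Contains (colorClass c 0) G₀ ∨ Contains (colorClass c 1) G₁

/-- Every 3-coloring of the edges of `K_N` yields a copy of `Gᵢ` in color `i` for some `i`. -/
def ramseyProp3 {V W X : Type*} (N : ℕ) (G₀ : SimpleGraph V) (G₁ : SimpleGraph W)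
    (G₂ : SimpleGraph X) : Prop :=
  ∀ c : Sym2 (Fin N) → Fin 3,
    Contains (colorClass c 0) G₀ ∨ Contains (colorClass c 1) G₁ ∨ Contains (colorClass c 2) G₂

/-- `k·K₂`: a matching consisting of `k` disjoint edges. -/
def matchingGraph (k : ℕ) : SimpleGraph (Fin k × Fin 2) :=
  SimpleGraph.fromRel (fun u v => u.1 = v.1)

def Tgt (n : ℕ) : ℕ :=
  if n % 5 = 0 then 2 * n else if n % 5 = 1 ∨ n % 5 = 4 then 2 * n - 2 else 2 * n - 3

def HasList {V : Type*} (G : SimpleGraph V) (k : ℕ) : Prop :=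
  ∃ l : List V, l.IsChain G.Adj ∧ l.Nodup ∧ l.length = k

lemma tgt_superadd {a b : ℕ} (ha : 1 ≤ a) (hb : 1 ≤ b) : Tgt a + Tgt b ≤ Tgt (a+b) := by
  unfold Tgt; split_ifs <;> omega

lemma tgt_ge (n : ℕ) (h : 6 ≤ n) : 2*n - 3 ≤ Tgt n := by unfold Tgt; split_ifs <;> omega

lemma tgt_small (n : ℕ) (h : n ≤ 5) : n.choose 2 ≤ Tgt n := by
  interval_cases n <;> decide

lemma tgt_succ (n : ℕ) : Tgt (n+1) = Tgt n + n % 5 := by unfold Tgt; split_ifs <;> omega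

variable {V : Type*} {G : SimpleGraph V}

lemma hl4 {a b c d : V} (h1 : G.Adj a b) (h2 : G.Adj b c) (h3 : G.Adj c d)
    (n1 : a ≠ c) (n2 : a ≠ d) (n3 : b ≠ d) : HasList G 4 :=
  ⟨[a,b,c,d], by simp [List.isChain_cons_cons, h1, h2, h3],
    by simp [n1, n2, n3, h1.ne, h2.ne, h3.ne], rfl⟩

lemma hl5 {a b c d e : V} (h1 : G.Adj a b) (h2 : G.Adj b c) (h3 : G.Adj c d) (h4 : G.Adj d e)
    (n1 : a ≠ c) (n2 : a ≠ d) (n3 : a ≠ e) (n4 : b ≠ d) (n5 : b ≠ e) (n6 : c ≠ e) :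
    HasList G 5 :=
  ⟨[a,b,c,d,e], by simp [List.isChain_cons_cons, h1, h2, h3, h4],
    by simp [n1, n2, n3, n4, n5, n6, h1.ne, h2.ne, h3.ne, h4.ne], rfl⟩

lemma hl6 {a b c d e f : V} (h1 : G.Adj a b) (h2 : G.Adj b c) (h3 : G.Adj c d) (h4 : G.Adj d e)
    (h5 : G.Adj e f)
    (n1 : a ≠ c) (n2 : a ≠ d) (n3 : a ≠ e) (n4 : a ≠ f) (n5 : b ≠ d) (n6 : b ≠ e) (n7 : b ≠ f)
    (n8 : c ≠ e) (n9 : c ≠ f) (n10 : d ≠ f) : HasList G 6 :=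
  ⟨[a,b,c,d,e,f], by simp [List.isChain_cons_cons, h1, h2, h3, h4, h5],
    by simp [n1, n2, n3, n4, n5, n6, n7, n8, n9, n10, h1.ne, h2.ne, h3.ne, h4.ne, h5.ne], rfl⟩

lemma list3 {l : List V} (hl : l.length = 3) : ∃ a b c, l = [a, b, c] := by
  rcases l with _|⟨a,l⟩; · simp at hl
  rcases l with _|⟨b,l⟩; · simp at hl
  rcases l with _|⟨c,l⟩; · simp at hl
  rcases l with _|⟨x,l⟩
  · exact ⟨a,b,c,rfl⟩
  · simp at hl
lemma list4 {l : List V} (hl : l.length = 4) : ∃ a b c d, l = [a, b, c, d] := by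
  rcases l with _|⟨a,l⟩; · simp at hl
  obtain ⟨b,c,d,rfl⟩ := list3 (by simpa using hl)
  exact ⟨a,b,c,d,rfl⟩
lemma list5 {l : List V} (hl : l.length = 5) : ∃ a b c d e, l = [a, b, c, d, e] := by
  rcases l with _|⟨a,l⟩; · simp at hl
  obtain ⟨b,c,d,e,rfl⟩ := list4 (by simpa using hl)
  exact ⟨a,b,c,d,e,rfl⟩


lemma contains_of_hasList {k : ℕ} (h : HasList G k) : Contains G (pathGraph k) := by
  obtain ⟨l, hc, hn, hl⟩ := h
  have hget := List.isChain_iff_getElem.mp hc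
  refine ⟨⟨fun i => l.get (Fin.cast hl.symm i), ?_⟩, ?_⟩
  · intro i j hij
    rw [pathGraph_adj] at hij
    rcases hij with h1 | h1
    · have h2 : (i : ℕ) < l.length - 1 := by omega
      have := hget i (by omega)
      convert this using 2
      simp only [List.get_eq_getElem]; congr 1; simp [← h1]
    · have h2 : (j : ℕ) < l.length - 1 := by omega
      have := (hget j (by omega)).symm
      convert this using 2
      simp only [List.get_eq_getElem]; congr 1; simp [← h1]
      rfl
  · intro i j hij
    have hinj := List.nodup_iff_injective_get.mp hn hij
    simpa [Fin.ext_iff] using hinj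

lemma hasList_of_walk {k : ℕ} {u v : V} (w : G.Walk u v) (hw : w.IsPath)
    (hk : k ≤ w.support.length) : HasList G k := by
  refine ⟨w.support.take k, w.isChain_adj_support.take k, ?_, ?_⟩
  · exact hw.support_nodup.sublist (List.take_sublist _ _)
  · rw [List.length_take]
    rw [Walk.length_support] at hk
    simp only [Walk.length_support]
    omega

lemma closed_walk {T : Set V} (hcl : ∀ a b, a ∈ T → G.Adj a b → b ∈ T) :
    ∀ {u v : V}, G.Walk u v → u ∈ T → v ∈ T := by
  intro u v w
  induction w with
  | nil => exact id
  | cons h p ih => exact fun hu => ih (hcl _ _ hu h)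

lemma flip_adj : flip G.Adj = G.Adj := by
  funext a b; exact propext (adj_comm G b a)

lemma exit (hconn : G.Preconnected) (P : Set V) (x0 p0 : V) (hx0 : x0 ∉ P) (hp0 : p0 ∈ P) :
    ∃ (l : List V) (p q : V), l.IsChain G.Adj ∧ l.Nodup ∧ (∀ z ∈ l, z ∉ P) ∧
      l.head? = some p ∧ l.getLast? = some x0 ∧ G.Adj p q ∧ q ∈ P := by
  classical
  set T : Set V := {z | ∃ w : G.Walk x0 z, ∀ y ∈ w.support, y ∉ P} with hT
  have hx0T : x0 ∈ T := ⟨Walk.nil, by simpa using hx0⟩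
  by_cases hex : ∃ z ∈ T, ∃ q, G.Adj z q ∧ q ∈ P
  · obtain ⟨z, ⟨w, hw⟩, q, hzq, hqP⟩ := hex
    have hp : w.bypass.IsPath := w.bypass_isPath
    have hne : w.bypass.support ≠ [] := w.bypass.support_ne_nil
    refine ⟨w.bypass.support.reverse, z, q, ?_, ?_, ?_, ?_, ?_, hzq, hqP⟩
    · rw [List.isChain_reverse]; exact w.bypass.isChain_adj_support.imp (fun _ _ h => h.symm)
    · exact List.nodup_reverse.mpr hp.support_nodup
    · intro y hy
      exact hw y (w.support_bypass_subset (List.mem_reverse.mp hy))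
    · rw [List.head?_reverse, List.getLast?_eq_getLast hne]
      simp
    · rw [List.getLast?_reverse, List.head?_eq_head hne]
      simp
  · exfalso
    push_neg at hex
    have hcl : ∀ a b, a ∈ T → G.Adj a b → b ∈ T := by
      rintro a b ⟨w, hw⟩ hab
      have hbP : b ∉ P := hex a ⟨w, hw⟩ b hab
      refine ⟨w.concat hab, ?_⟩
      intro y hy
      rw [Walk.support_concat, List.mem_append] at hy
      rcases hy with h | h
      · exact hw y h
      · simp only [List.mem_singleton] at h
        subst h; exact hbP
    have hmem := closed_walk hcl (hconn x0 p0).some hx0T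
    obtain ⟨w, hw⟩ := hmem
    exact hw p0 w.end_mem_support hp0

lemma exit' (hconn : G.Preconnected) (P : Set V) (x0 p0 : V) (hx0 : x0 ∉ P) (hp0 : p0 ∈ P) :
    ∃ p q, G.Adj p q ∧ q ∈ P ∧ p ∉ P ∧
      (p = x0 ∨ ∃ w, w ∉ P ∧ G.Adj w p ∧ (w = x0 ∨ ∃ u, u ∉ P ∧ u ≠ p ∧ G.Adj u w)) := by
  obtain ⟨l, p, q, hc, hn, hP, hh, hg, hpq, hqP⟩ := exit hconn P x0 p0 hx0 hp0
  rcases l with _ | ⟨a, l⟩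
  · simp at hh
  · have ha : a = p := by simpa using hh
    subst ha
    rcases l with _ | ⟨w, l⟩
    · have : a = x0 := by simpa using hg
      exact ⟨a, q, hpq, hqP, hP a (by simp), Or.inl this⟩
    · have hpw : G.Adj a w := (List.isChain_cons_cons.mp hc).1
      rcases l with _ | ⟨u, l⟩
      · have hw : w = x0 := by simpa using hg
        exact ⟨a, q, hpq, hqP, hP a (by simp), Or.inr ⟨w, hP w (by simp), hpw.symm, Or.inl hw⟩⟩
      · have hwu : G.Adj w u := (List.isChain_cons_cons.mp (List.isChain_cons_cons.mp hc).2).1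
        have hup : u ≠ a := by
          intro h; subst h
          simp [List.nodup_cons] at hn
        exact ⟨a, q, hpq, hqP, hP a (by simp), Or.inr ⟨w, hP w (by simp), hpw.symm,
          Or.inr ⟨u, hP u (by simp), hup, hwu.symm⟩⟩⟩

section CaseLemmas
variable [Fintype V] [DecidableEq V] [DecidableRel G.Adj]

lemma case3 [Fintype V] [DecidableEq V] [DecidableRel G.Adj]
    (hconn : G.Preconnected) {a b c : V}
    (hab : G.Adj a b) (hbc : G.Adj b c) (hac : a ≠ c)
    (hno : ¬ HasList G 4) (hn : 3 ≤ Fintype.card V) :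
    ∑ v, G.degree v ≤ 2 * Fintype.card V := by
  set Pf : Finset V := {a, b, c} with hPfdef
  have haPf : a ∈ Pf := by simp [hPfdef]
  have hbPf : b ∈ Pf := by simp [hPfdef]
  have hcPf : c ∈ Pf := by simp [hPfdef]
  have hcard : Pf.card = 3 := Finset.card_eq_three.mpr ⟨a, b, c, hab.ne, hac, hbc.ne, rfl⟩
  have hmem : ∀ x, x ∉ Pf ↔ (x ≠ a ∧ x ≠ b ∧ x ≠ c) := by
    intro x; simp [hPfdef]
  -- every vertex outside Pf has all neighbors equal to b
  have hXnb : ∀ x, x ∉ Pf → ∀ y, G.Adj x y → y = b := by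
    intro x hx y hxy
    obtain ⟨hxa, hxb, hxc⟩ := (hmem x).mp hx
    by_contra hyb
    have hya : y ≠ a := by
      intro h; subst h
      exact hno (hl4 hxy hab hbc hxb hxc hac)
    have hyc : y ≠ c := by
      intro h; subst h
      exact hno (hl4 hxy hbc.symm hab.symm hxb hxa hac.symm)
    have hyPf : y ∉ Pf := (hmem y).mpr ⟨hya, hyb, hyc⟩
    obtain ⟨p, q, hpq, hqP, hpP, hbr⟩ :=
      exit' hconn {z | z ∈ Pf} x a hx haPf
    simp only [Set.mem_setOf_eq] at hpq hqP hpP ⊢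
    -- get an outside neighbor w of p
    have hw : ∃ w, w ∉ Pf ∧ G.Adj w p := by
      rcases hbr with rfl | ⟨w, hwP, hwp, _⟩
      · exact ⟨y, hyPf, hxy.symm⟩
      · exact ⟨w, hwP, hwp⟩
    obtain ⟨w, hwPf, hwp⟩ := hw
    obtain ⟨hpa, hpb, hpc⟩ := (hmem p).mp hpP
    obtain ⟨hwa, hwb, hwc⟩ := (hmem w).mp hwPf
    simp only [hPfdef, Finset.mem_insert, Finset.mem_singleton] at hqP
    rcases hqP with rfl | rfl | rfl
    · exact hno (hl4 hpq hab hbc hpb hpc hac)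
    · exact hno (hl4 hwp hpq hab.symm hwb hwa hpa)
    · exact hno (hl4 hpq hbc.symm hab.symm hpb hpa hac.symm)
  have hdegX : ∀ x ∈ univ.filter (· ∉ Pf), G.degree x ≤ 1 := by
    intro x hx
    rw [Finset.mem_filter] at hx
    have hsub : G.neighborFinset x ⊆ {b} := by
      intro y hy
      rw [mem_neighborFinset] at hy
      simp [hXnb x hx.2 y hy]
    calc G.degree x = #(G.neighborFinset x) := rfl
      _ ≤ #({b} : Finset V) := Finset.card_le_card hsub
      _ = 1 := Finset.card_singleton b
  have hdega : G.degree a ≤ 2 := by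
    have hsub : G.neighborFinset a ⊆ {b, c} := by
      intro y hy
      rw [mem_neighborFinset] at hy
      simp only [Finset.mem_insert, Finset.mem_singleton]
      by_contra hcon
      push_neg at hcon
      have hyPf : y ∉ Pf := (hmem y).mpr ⟨hy.ne', hcon.1, hcon.2⟩
      exact hab.ne (hXnb y hyPf a hy.symm)
    calc G.degree a = #(G.neighborFinset a) := rfl
      _ ≤ #({b, c} : Finset V) := Finset.card_le_card hsub
      _ ≤ 2 := (Finset.card_insert_le _ _).trans (by simp)
  have hdegc : G.degree c ≤ 2 := by
    have hsub : G.neighborFinset c ⊆ {b, a} := by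
      intro y hy
      rw [mem_neighborFinset] at hy
      simp only [Finset.mem_insert, Finset.mem_singleton]
      by_contra hcon
      push_neg at hcon
      have hyPf : y ∉ Pf := (hmem y).mpr ⟨hcon.2, hcon.1, hy.ne'⟩
      exact hbc.ne' (hXnb y hyPf c hy.symm)
    calc G.degree c = #(G.neighborFinset c) := rfl
      _ ≤ #({b, a} : Finset V) := Finset.card_le_card hsub
      _ ≤ 2 := (Finset.card_insert_le _ _).trans (by simp)
  have hdegb : G.degree b < Fintype.card V := G.degree_lt_card_verts b
  have hsplit : ∑ v ∈ univ.filter (· ∈ Pf), G.degree v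
      + ∑ v ∈ univ.filter (fun x => ¬ x ∈ Pf), G.degree v = ∑ v, G.degree v :=
    by exact Finset.sum_filter_add_sum_filter_not univ (· ∈ Pf) (fun v => G.degree v)
  have hfPf : univ.filter (· ∈ Pf) = Pf := by ext z; simp
  have hsum3 : ∑ v ∈ Pf, G.degree v = G.degree a + (G.degree b + G.degree c) := by
    rw [hPfdef]
    rw [Finset.sum_insert (by simp [hab.ne, hac]), Finset.sum_insert (by simp [hbc.ne]),
      Finset.sum_singleton]
  have hX : ∑ v ∈ univ.filter (· ∉ Pf), G.degree v ≤ #(univ.filter (· ∉ Pf)) := by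
    calc ∑ v ∈ univ.filter (· ∉ Pf), G.degree v ≤ ∑ _v ∈ univ.filter (· ∉ Pf), 1 :=
        Finset.sum_le_sum hdegX
      _ = #(univ.filter (· ∉ Pf)) := by simp
  have hXcard : #(univ.filter (· ∉ Pf)) = Fintype.card V - 3 := by
    have he : univ.filter (· ∉ Pf) = Pfᶜ := by ext z; simp
    rw [he, Finset.card_compl, hcard]
  rw [← hsplit, hfPf, hsum3]
  omega

lemma case4 [Fintype V] [DecidableEq V] [DecidableRel G.Adj]
    (hconn : G.Preconnected) {a b c d : V}
    (hab : G.Adj a b) (hbc : G.Adj b c) (hcd : G.Adj c d)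
    (hac : a ≠ c) (had : a ≠ d) (hbd : b ≠ d)
    (hno : ¬ HasList G 5) (hn : 4 ≤ Fintype.card V) :
    ∑ v, G.degree v ≤ 3 * Fintype.card V := by
  set Pf : Finset V := {a, b, c, d} with hPfdef
  have haPf : a ∈ Pf := by simp [hPfdef]
  have hmem : ∀ x, x ∉ Pf ↔ (x ≠ a ∧ x ≠ b ∧ x ≠ c ∧ x ≠ d) := by
    intro x; simp [hPfdef]
  have hcard : Pf.card = 4 := by
    rw [hPfdef, Finset.card_insert_of_notMem (by simp [hab.ne, hac, had]),
      Finset.card_insert_of_notMem (by simp [hbc.ne, hbd]),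
      Finset.card_insert_of_notMem (by simp [hcd.ne]), Finset.card_singleton]
  have hK1 : ∀ x, x ∉ Pf → ∀ y, G.Adj x y → y = b ∨ y = c := by
    intro x hx y hxy
    obtain ⟨hxa, hxb, hxc, hxd⟩ := (hmem x).mp hx
    by_contra hcon
    push_neg at hcon
    obtain ⟨hyb, hyc⟩ := hcon
    have hya : y ≠ a := by
      intro h; subst h
      exact hno (hl5 hxy hab hbc hcd hxb hxc hxd hac had hbd)
    have hyd : y ≠ d := by
      intro h; subst h
      exact hno (hl5 hxy hcd.symm hbc.symm hab.symm hxc hxb hxa hbd.symm had.symm hac.symm)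
    have hyPf : y ∉ Pf := (hmem y).mpr ⟨hya, hyb, hyc, hyd⟩
    obtain ⟨p, q, hpq, hqP, hpP, hbr⟩ := exit' hconn {z | z ∈ Pf} x a hx haPf
    simp only [Set.mem_setOf_eq] at hqP hpP
    have hw : ∃ w, w ∉ Pf ∧ G.Adj w p := by
      rcases hbr with rfl | ⟨w, hwP, hwp, _⟩
      · exact ⟨y, hyPf, hxy.symm⟩
      · exact ⟨w, hwP, hwp⟩
    obtain ⟨w, hwPf, hwp⟩ := hw
    obtain ⟨hpa, hpb, hpc, hpd⟩ := (hmem p).mp hpP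
    obtain ⟨hwa, hwb, hwc, hwd⟩ := (hmem w).mp hwPf
    simp only [hPfdef, Finset.mem_insert, Finset.mem_singleton] at hqP
    have hwpne : w ≠ p := hwp.ne
    rcases hqP with rfl | rfl | rfl | rfl
    · exact hno (hl5 hpq hab hbc hcd hpb hpc hpd hac had hbd)
    · exact hno (hl5 hwp hpq hbc hcd hwb hwc hwd hpc hpd hbd)
    · exact hno (hl5 hwp hpq hbc.symm hab.symm hwc hwb hwa hpb hpa hac.symm)
    · exact hno (hl5 hpq hcd.symm hbc.symm hab.symm hpc hpb hpa hbd.symm had.symm hac.symm)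
  have hK2 : ∀ x, x ∉ Pf → ¬(G.Adj x b ∧ G.Adj x c) := by
    rintro x hx ⟨hxb, hxc⟩
    obtain ⟨ha', hb', hc', hd'⟩ := (hmem x).mp hx
    exact hno (hl5 hab hxb.symm hxc hcd ha'.symm hac had hbc.ne hbd hd')
  have hdegX : ∀ x ∈ univ.filter (· ∉ Pf), G.degree x ≤ 1 := by
    intro x hx
    rw [Finset.mem_filter] at hx
    rw [show G.degree x = #(G.neighborFinset x) from rfl]
    apply Finset.card_le_one.mpr
    intro y hy z hz
    rw [mem_neighborFinset] at hy hz
    rcases hK1 x hx.2 y hy with rfl | rfl <;> rcases hK1 x hx.2 z hz with rfl | rfl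
    · rfl
    · exact absurd ⟨hy, hz⟩ (hK2 x hx.2)
    · exact absurd ⟨hz, hy⟩ (hK2 x hx.2)
    · rfl
  have hdega : G.degree a ≤ 3 := by
    have hsub : G.neighborFinset a ⊆ {b, c, d} := by
      intro y hy
      rw [mem_neighborFinset] at hy
      simp only [Finset.mem_insert, Finset.mem_singleton]
      by_contra hcon
      push_neg at hcon
      have hyPf : y ∉ Pf := (hmem y).mpr ⟨hy.ne', hcon.1, hcon.2.1, hcon.2.2⟩
      rcases hK1 y hyPf a hy.symm with h | h
      · exact hab.ne h
      · exact hac h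
    calc G.degree a = #(G.neighborFinset a) := rfl
      _ ≤ #({b, c, d} : Finset V) := Finset.card_le_card hsub
      _ ≤ 3 := (Finset.card_insert_le _ _).trans
          (Nat.add_le_add_right ((Finset.card_insert_le _ _).trans (by simp)) 1)
  have hdegd : G.degree d ≤ 3 := by
    have hsub : G.neighborFinset d ⊆ {a, b, c} := by
      intro y hy
      rw [mem_neighborFinset] at hy
      simp only [Finset.mem_insert, Finset.mem_singleton]
      by_contra hcon
      push_neg at hcon
      have hyPf : y ∉ Pf := (hmem y).mpr ⟨hcon.1, hcon.2.1, hcon.2.2, hy.ne'⟩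
      rcases hK1 y hyPf d hy.symm with h | h
      · exact hbd h.symm
      · exact hcd.ne h.symm
    calc G.degree d = #(G.neighborFinset d) := rfl
      _ ≤ #({a, b, c} : Finset V) := Finset.card_le_card hsub
      _ ≤ 3 := (Finset.card_insert_le _ _).trans
          (Nat.add_le_add_right ((Finset.card_insert_le _ _).trans (by simp)) 1)
  have hdegb : G.degree b < Fintype.card V := G.degree_lt_card_verts b
  have hdegc : G.degree c < Fintype.card V := G.degree_lt_card_verts c
  have hsplit : ∑ v ∈ univ.filter (· ∈ Pf), G.degree v
      + ∑ v ∈ univ.filter (fun x => ¬ x ∈ Pf), G.degree v = ∑ v, G.degree v :=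
    by exact Finset.sum_filter_add_sum_filter_not univ (· ∈ Pf) (fun v => G.degree v)
  have hfPf : univ.filter (· ∈ Pf) = Pf := by ext z; simp
  have hsum4 : ∑ v ∈ Pf, G.degree v
      = G.degree a + (G.degree b + (G.degree c + G.degree d)) := by
    rw [hPfdef]
    rw [Finset.sum_insert (by simp [hab.ne, hac, had]),
      Finset.sum_insert (by simp [hbc.ne, hbd]),
      Finset.sum_insert (by simp [hcd.ne]), Finset.sum_singleton]
  have hX : ∑ v ∈ univ.filter (· ∉ Pf), G.degree v ≤ #(univ.filter (· ∉ Pf)) := by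
    calc ∑ v ∈ univ.filter (· ∉ Pf), G.degree v ≤ ∑ _v ∈ univ.filter (· ∉ Pf), 1 :=
        Finset.sum_le_sum hdegX
      _ = #(univ.filter (· ∉ Pf)) := by simp
  have hXcard : #(univ.filter (· ∉ Pf)) = Fintype.card V - 4 := by
    have he : univ.filter (· ∉ Pf) = Pfᶜ := by ext z; simp
    rw [he, Finset.card_compl, hcard]
  rw [← hsplit, hfPf, hsum4]
  omega

lemma case5 (hconn : G.Preconnected) {a b c d e : V}
    (hab : G.Adj a b) (hbc : G.Adj b c) (hcd : G.Adj c d) (hde : G.Adj d e)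
    (hac : a ≠ c) (had : a ≠ d) (hae : a ≠ e) (hbd : b ≠ d) (hbe : b ≠ e) (hce : c ≠ e)
    (hno : ¬ HasList G 6) (hn : 6 ≤ Fintype.card V) :
    ∑ v, G.degree v ≤ 4 * Fintype.card V - 6 := by
  set Pf : Finset V := {a, b, c, d, e} with hPfdef
  have haPf : a ∈ Pf := by simp [hPfdef]
  have hbPf : b ∈ Pf := by simp [hPfdef]
  have hcPf : c ∈ Pf := by simp [hPfdef]
  have hdPf : d ∈ Pf := by simp [hPfdef]
  have hePf : e ∈ Pf := by simp [hPfdef]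
  have hmem : ∀ x, x ∉ Pf ↔ (x ≠ a ∧ x ≠ b ∧ x ≠ c ∧ x ≠ d ∧ x ≠ e) := by
    intro x; simp [hPfdef]
  have hcard5 : Pf.card = 5 := by
    rw [hPfdef, Finset.card_insert_of_notMem (by simp [hab.ne, hac, had, hae]),
      Finset.card_insert_of_notMem (by simp [hbc.ne, hbd, hbe]),
      Finset.card_insert_of_notMem (by simp [hcd.ne, hce]),
      Finset.card_insert_of_notMem (by simp [hde.ne]), Finset.card_singleton]
  -- (S1) no outside vertex is adjacent to a or e
  have hS1a : ∀ x, x ∉ Pf → ¬ G.Adj x a := by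
    intro x hx hxa
    obtain ⟨h1, h2, h3, h4, h5⟩ := (hmem x).mp hx
    exact hno (hl6 hxa hab hbc hcd hde h2 h3 h4 h5 hac had hae hbd hbe hce)
  have hS1e : ∀ x, x ∉ Pf → ¬ G.Adj x e := by
    intro x hx hxe
    obtain ⟨h1, h2, h3, h4, h5⟩ := (hmem x).mp hx
    exact hno (hl6 hxe hde.symm hcd.symm hbc.symm hab.symm h4 h3 h2 h1
      hce.symm hbe.symm hae.symm hbd.symm had.symm hac.symm)
  -- (S2) no outside vertex adjacent to two consecutive inner vertices
  have hS2bc : ∀ x, x ∉ Pf → ¬ (G.Adj x b ∧ G.Adj x c) := by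
    rintro x hx ⟨hxb, hxc⟩
    obtain ⟨h1, h2, h3, h4, h5⟩ := (hmem x).mp hx
    exact hno (hl6 hab hxb.symm hxc hcd hde h1.symm hac had hae hbc.ne hbd hbe h4 h5 hce)
  have hS2cd : ∀ x, x ∉ Pf → ¬ (G.Adj x c ∧ G.Adj x d) := by
    rintro x hx ⟨hxc, hxd⟩
    obtain ⟨h1, h2, h3, h4, h5⟩ := (hmem x).mp hx
    exact hno (hl6 hab hbc hxc.symm hxd hde hac h1.symm had hae h2.symm hbd hbe hcd.ne hce h5)
  -- (S3) an endpoint of an outside-outside edge is not adjacent to b nor d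
  have hS3b : ∀ x y, x ∉ Pf → y ∉ Pf → G.Adj x y → ¬ G.Adj x b := by
    intro x y hx hy hxy hxb
    obtain ⟨hx1, hx2, hx3, hx4, hx5⟩ := (hmem x).mp hx
    obtain ⟨hy1, hy2, hy3, hy4, hy5⟩ := (hmem y).mp hy
    exact hno (hl6 hxy.symm hxb hbc hcd hde hy2 hy3 hy4 hy5 hx3 hx4 hx5 hbd hbe hce)
  have hS3d : ∀ x y, x ∉ Pf → y ∉ Pf → G.Adj x y → ¬ G.Adj x d := by
    intro x y hx hy hxy hxd
    obtain ⟨hx1, hx2, hx3, hx4, hx5⟩ := (hmem x).mp hx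
    obtain ⟨hy1, hy2, hy3, hy4, hy5⟩ := (hmem y).mp hy
    exact hno (hl6 hxy.symm hxd hcd.symm hbc.symm hab.symm hy4 hy3 hy2 hy1
      hx3 hx2 hx1 hbd.symm had.symm hac.symm)
  -- (W) one endpoint of an outside-outside edge is adjacent to c
  have hW : ∀ x y, x ∉ Pf → y ∉ Pf → G.Adj x y → G.Adj x c ∨ G.Adj y c := by
    intro x y hx hy hxy
    by_contra hcon
    push_neg at hcon
    obtain ⟨hxc', hyc'⟩ := hcon
    obtain ⟨p, q, hpq, hqP, hpP, hbr⟩ := exit' hconn {z | z ∈ Pf} x a hx haPf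
    simp only [Set.mem_setOf_eq] at hqP hpP
    obtain ⟨hp1, hp2, hp3, hp4, hp5⟩ := (hmem p).mp hpP
    simp only [hPfdef, Finset.mem_insert, Finset.mem_singleton] at hqP
    rcases hqP with rfl | rfl | rfl | rfl | rfl
    · exact hS1a p hpP hpq
    · -- q = b
      have hw : ∃ w, w ∉ Pf ∧ G.Adj w p := by
        rcases hbr with rfl | ⟨w, hwP, hwp, _⟩
        · exact ⟨y, hy, hxy.symm⟩
        · exact ⟨w, hwP, hwp⟩
      obtain ⟨w, hwPf, hwp⟩ := hw
      obtain ⟨hw1, hw2, hw3, hw4, hw5⟩ := (hmem w).mp hwPf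
      exact hno (hl6 hwp hpq hbc hcd hde hw2 hw3 hw4 hw5 hp3 hp4 hp5 hbd hbe hce)
    · -- q = c
      rcases hbr with rfl | ⟨w, hwPf, hwp, hinner⟩
      · exact hxc' hpq
      · obtain ⟨hw1, hw2, hw3, hw4, hw5⟩ := (hmem w).mp hwPf
        rcases hinner with rfl | ⟨u, huPf, hup, huw⟩
        · -- w = x
          by_cases hpy : p = y
          · exact hyc' (hpy ▸ hpq)
          · obtain ⟨hy1, hy2, hy3, hy4, hy5⟩ := (hmem y).mp hy
            exact hno (hl6 hxy.symm hwp hpq hcd hde (fun h => hpy h.symm) hy3 hy4 hy5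
              hw3 hw4 hw5 hp4 hp5 hce)
        · obtain ⟨hu1, hu2, hu3, hu4, hu5⟩ := (hmem u).mp huPf
          exact hno (hl6 huw hwp hpq hcd hde hup hu3 hu4 hu5 hw3 hw4 hw5 hp4 hp5 hce)
    · -- q = d
      have hw : ∃ w, w ∉ Pf ∧ G.Adj w p := by
        rcases hbr with rfl | ⟨w, hwP, hwp, _⟩
        · exact ⟨y, hy, hxy.symm⟩
        · exact ⟨w, hwP, hwp⟩
      obtain ⟨w, hwPf, hwp⟩ := hw
      obtain ⟨hw1, hw2, hw3, hw4, hw5⟩ := (hmem w).mp hwPf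
      exact hno (hl6 hwp hpq hcd.symm hbc.symm hab.symm hw4 hw3 hw2 hw1 hp3 hp2 hp1
        hbd.symm had.symm hac.symm)
    · exact hS1e p hpP hpq
  -- some outside vertex is adjacent to b, c or d
  have hConnNbr : ∃ x, x ∉ Pf ∧ (G.Adj x b ∨ G.Adj x c ∨ G.Adj x d) := by
    have hxex : ∃ x, x ∉ Pf := by
      by_contra hall
      push_neg at hall
      have : (univ : Finset V).card ≤ Pf.card := Finset.card_le_card (fun z _ => hall z)
      rw [Finset.card_univ, hcard5] at this
      omega
    obtain ⟨x, hxPf⟩ := hxex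
    obtain ⟨wlk⟩ := hconn x a
    cases wlk with
    | nil => exact absurd haPf hxPf
    | @cons _ v _ hadj p =>
      by_cases hvPf : v ∈ Pf
      · simp only [hPfdef, Finset.mem_insert, Finset.mem_singleton] at hvPf
        rcases hvPf with rfl | rfl | rfl | rfl | rfl
        · exact absurd hadj (hS1a x hxPf)
        · exact ⟨x, hxPf, Or.inl hadj⟩
        · exact ⟨x, hxPf, Or.inr (Or.inl hadj)⟩
        · exact ⟨x, hxPf, Or.inr (Or.inr hadj)⟩
        · exact absurd hadj (hS1e x hxPf)
      · rcases hW x v hxPf hvPf hadj with h | h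
        · exact ⟨x, hxPf, Or.inr (Or.inl h)⟩
        · exact ⟨v, hvPf, Or.inr (Or.inl h)⟩
  -- (F0) structure of outside vertices of degree ≥ 3 : stars centered at them, joined to c
  have hF0 : ∀ h, h ∉ Pf → 3 ≤ G.degree h →
      G.Adj h c ∧ ∀ y, G.Adj h y → y ≠ c → (y ∉ Pf ∧ G.neighborFinset y = {h}) := by
    intro h hhPf hdeg
    obtain ⟨hh1, hh2, hh3, hh4, hh5⟩ := (hmem h).mp hhPf
    -- h is not adjacent to b nor d
    have hhb : ¬ G.Adj h b := by
      intro hhb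
      have hsub : G.neighborFinset h ⊆ {b, d} := by
        intro y hy
        rw [mem_neighborFinset] at hy
        simp only [Finset.mem_insert, Finset.mem_singleton]
        by_contra hcon
        push_neg at hcon
        by_cases hyPf : y ∈ Pf
        · simp only [hPfdef, Finset.mem_insert, Finset.mem_singleton] at hyPf
          rcases hyPf with rfl | rfl | rfl | rfl | rfl
          · exact hS1a h hhPf hy
          · exact hcon.1 rfl
          · exact hS2bc h hhPf ⟨hhb, hy⟩
          · exact hcon.2 rfl
          · exact hS1e h hhPf hy
        · exact hS3b h y hhPf hyPf hy hhb
      have : G.degree h ≤ 2 := by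
        calc G.degree h = #(G.neighborFinset h) := rfl
          _ ≤ #({b, d} : Finset V) := Finset.card_le_card hsub
          _ ≤ 2 := (Finset.card_insert_le _ _).trans (by simp)
      omega
    have hhd : ¬ G.Adj h d := by
      intro hhd
      have hsub : G.neighborFinset h ⊆ {b, d} := by
        intro y hy
        rw [mem_neighborFinset] at hy
        simp only [Finset.mem_insert, Finset.mem_singleton]
        by_contra hcon
        push_neg at hcon
        by_cases hyPf : y ∈ Pf
        · simp only [hPfdef, Finset.mem_insert, Finset.mem_singleton] at hyPf
          rcases hyPf with rfl | rfl | rfl | rfl | rfl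
          · exact hS1a h hhPf hy
          · exact hcon.1 rfl
          · exact hS2cd h hhPf ⟨hy, hhd⟩
          · exact hcon.2 rfl
          · exact hS1e h hhPf hy
        · exact hS3d h y hhPf hyPf hy hhd
      have : G.degree h ≤ 2 := by
        calc G.degree h = #(G.neighborFinset h) := rfl
          _ ≤ #({b, d} : Finset V) := Finset.card_le_card hsub
          _ ≤ 2 := (Finset.card_insert_le _ _).trans (by simp)
      omega
    -- all neighbors of h other than c are outside
    have hnbout : ∀ y, G.Adj h y → y ≠ c → y ∉ Pf := by
      intro y hy hyc
      rw [hmem]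
      refine ⟨?_, ?_, hyc, ?_, ?_⟩
      · intro hcon; subst hcon; exact hS1a h hhPf hy
      · intro hcon; subst hcon; exact hhb hy
      · intro hcon; subst hcon; exact hhd hy
      · intro hcon; subst hcon; exact hS1e h hhPf hy
    -- h has two distinct neighbors other than c
    have htwo : ∃ y ∈ (G.neighborFinset h).erase c, ∃ z ∈ (G.neighborFinset h).erase c, y ≠ z := by
      have hcle : 1 < #((G.neighborFinset h).erase c) := by
        have := Finset.pred_card_le_card_erase (a := c) (s := G.neighborFinset h)
        have hd : G.degree h = #(G.neighborFinset h) := rfl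
        omega
      exact Finset.one_lt_card.mp hcle
    obtain ⟨y0, hy0, z0, hz0, hyz0⟩ := htwo
    have hy0' : G.Adj h y0 ∧ y0 ≠ c := by
      rw [Finset.mem_erase, mem_neighborFinset] at hy0; exact ⟨hy0.2, hy0.1⟩
    have hz0' : G.Adj h z0 ∧ z0 ≠ c := by
      rw [Finset.mem_erase, mem_neighborFinset] at hz0; exact ⟨hz0.2, hz0.1⟩
    have hy0Pf : y0 ∉ Pf := hnbout y0 hy0'.1 hy0'.2
    have hz0Pf : z0 ∉ Pf := hnbout z0 hz0'.1 hz0'.2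
    -- h is adjacent to c
    have hhc : G.Adj h c := by
      rcases hW h y0 hhPf hy0Pf hy0'.1 with h' | h'
      · exact h'
      · obtain ⟨hy1, hy2, hy3, hy4, hy5⟩ := (hmem y0).mp hy0Pf
        obtain ⟨hz1, hz2, hz3, hz4, hz5⟩ := (hmem z0).mp hz0Pf
        exact absurd (hl6 hz0'.1.symm hy0'.1 h' hcd hde (Ne.symm hyz0) hz3 hz4 hz5
          hh3 hh4 hh5 hy4 hy5 hce) hno
    refine ⟨hhc, ?_⟩
    intro y hy hyc
    have hyPf : y ∉ Pf := hnbout y hy hyc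
    obtain ⟨hy1, hy2, hy3, hy4, hy5⟩ := (hmem y).mp hyPf
    refine ⟨hyPf, ?_⟩
    ext w
    rw [mem_neighborFinset, Finset.mem_singleton]
    constructor
    · intro hyw
      by_contra hwh
      by_cases hwPf : w ∈ Pf
      · simp only [hPfdef, Finset.mem_insert, Finset.mem_singleton] at hwPf
        rcases hwPf with rfl | rfl | hwc | rfl | rfl
        · exact hS1a y hyPf hyw
        · exact hS3b y h hyPf hhPf hy.symm hyw
        · -- w = c : find a second neighbor z' of h with z' ≠ y
          rw [hwc] at hyw
          have hz' : ∃ z', (G.Adj h z' ∧ z' ≠ c) ∧ z' ≠ y := by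
            by_cases hyy : y0 = y
            · exact ⟨z0, hz0', fun hcon => hyz0 (hyy ▸ hcon ▸ rfl)⟩
            · exact ⟨y0, hy0', hyy⟩
          obtain ⟨z', ⟨hhz', hz'c⟩, hz'y⟩ := hz'
          have hz'Pf : z' ∉ Pf := hnbout z' hhz' hz'c
          obtain ⟨hw1, hw2, hw3, hw4, hw5⟩ := (hmem z').mp hz'Pf
          exact hno (hl6 hhz'.symm hy hyw hcd hde hz'y hw3 hw4 hw5
            hh3 hh4 hh5 hy4 hy5 hce)
        · exact hS3d y h hyPf hhPf hy.symm hyw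
        · exact hS1e y hyPf hyw
      · obtain ⟨hw1, hw2, hw3, hw4, hw5⟩ := (hmem w).mp hwPf
        exact hno (hl6 hyw.symm hy.symm hhc hcd hde hwh hw3 hw4 hw5
          hy3 hy4 hy5 hh4 hh5 hce)
    · intro hcon; subst hcon; exact hy.symm
  classical
  set X : Finset V := univ.filter (· ∉ Pf) with hXdef
  have hXmem : ∀ x, x ∈ X ↔ x ∉ Pf := by intro x; simp [hXdef]
  have hXcard : X.card = Fintype.card V - 5 := by
    have he : X = Pfᶜ := by ext z; simp [hXdef]
    rw [he, Finset.card_compl, hcard5]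
  have hPart1 : ∑ x ∈ X, G.degree x ≤ 2 * X.card := by
    set Hs : Finset V := X.filter (fun h => 3 ≤ G.degree h) with hHsdef
    set lv : V → Finset V := fun h => (G.neighborFinset h).erase c with hlvdef
    have hHsX : ∀ h ∈ Hs, h ∉ Pf ∧ 3 ≤ G.degree h := by
      intro h hh; rw [hHsdef, Finset.mem_filter] at hh
      exact ⟨(hXmem h).mp hh.1, hh.2⟩
    have hlvmem : ∀ h ∈ Hs, ∀ y ∈ lv h,
        G.Adj h y ∧ y ≠ c ∧ y ∉ Pf ∧ G.neighborFinset y = {h} := by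
      intro h hh y hy
      obtain ⟨hhPf, hdeg⟩ := hHsX h hh
      rw [hlvdef] at hy
      simp only [Finset.mem_erase, mem_neighborFinset] at hy
      obtain ⟨h1, h2⟩ := (hF0 h hhPf hdeg).2 y hy.2 hy.1
      exact ⟨hy.2, hy.1, h1, h2⟩
    have hlvcard : ∀ h ∈ Hs, #(lv h) + 1 = G.degree h := by
      intro h hh
      obtain ⟨hhPf, hdeg⟩ := hHsX h hh
      have hcmem : c ∈ G.neighborFinset h := by
        rw [mem_neighborFinset]; exact (hF0 h hhPf hdeg).1
      rw [hlvdef]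
      simp only
      rw [Finset.card_erase_of_mem hcmem]
      have hd : G.degree h = #(G.neighborFinset h) := rfl
      omega
    have hdisj : ∀ h1 ∈ Hs, ∀ h2 ∈ Hs, h1 ≠ h2 → Disjoint (lv h1) (lv h2) := by
      intro h1 hh1 h2 hh2 hne
      rw [Finset.disjoint_left]
      intro y hy1 hy2
      have e1 := (hlvmem h1 hh1 y hy1).2.2.2
      have e2 := (hlvmem h2 hh2 y hy2).2.2.2
      exact hne (Finset.singleton_inj.mp (e1.symm.trans e2))
    set Lv := Hs.biUnion lv with hLvdef
    have hLvcard : Lv.card = ∑ h ∈ Hs, #(lv h) := Finset.card_biUnion hdisj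
    have hLvdeg : ∀ y ∈ Lv, G.degree y = 1 := by
      intro y hy
      rw [hLvdef, Finset.mem_biUnion] at hy
      obtain ⟨h, hh, hy⟩ := hy
      have he := (hlvmem h hh y hy).2.2.2
      rw [show G.degree y = #(G.neighborFinset y) from rfl, he, Finset.card_singleton]
    have hLvX : Lv ⊆ X := by
      intro y hy
      rw [hLvdef, Finset.mem_biUnion] at hy
      obtain ⟨h, hh, hy⟩ := hy
      exact (hXmem y).mpr (hlvmem h hh y hy).2.2.1
    set X' := X.filter (fun h => ¬ 3 ≤ G.degree h) with hX'def
    have hsplit : ∑ x ∈ Hs, G.degree x + ∑ x ∈ X', G.degree x = ∑ x ∈ X, G.degree x := by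
      rw [hHsdef, hX'def]
      exact Finset.sum_filter_add_sum_filter_not X _ (fun v => G.degree v)
    have hHsum : ∑ x ∈ Hs, G.degree x = Lv.card + Hs.card := by
      calc ∑ x ∈ Hs, G.degree x = ∑ h ∈ Hs, (#(lv h) + 1) :=
          Finset.sum_congr rfl (fun h hh => (hlvcard h hh).symm)
        _ = (∑ h ∈ Hs, #(lv h)) + ∑ _h ∈ Hs, 1 := Finset.sum_add_distrib
        _ = Lv.card + Hs.card := by rw [hLvcard]; simp
    have hLvX' : Lv ⊆ X' := by
      intro y hy
      rw [hX'def, Finset.mem_filter]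
      refine ⟨hLvX hy, ?_⟩
      have := hLvdeg y hy
      omega
    have hsplit2 : ∑ x ∈ X'.filter (· ∈ Lv), G.degree x
        + ∑ x ∈ X'.filter (fun x => ¬ x ∈ Lv), G.degree x = ∑ x ∈ X', G.degree x :=
      Finset.sum_filter_add_sum_filter_not X' _ (fun v => G.degree v)
    have hfLv : X'.filter (· ∈ Lv) = Lv := by
      ext y
      rw [Finset.mem_filter]
      exact ⟨fun h => h.2, fun h => ⟨hLvX' h, h⟩⟩
    have hsum_lv : ∑ x ∈ X'.filter (· ∈ Lv), G.degree x = Lv.card := by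
      rw [hfLv]
      calc ∑ x ∈ Lv, G.degree x = ∑ _x ∈ Lv, 1 := Finset.sum_congr rfl hLvdeg
        _ = Lv.card := by simp
    have hsum_rest : ∑ x ∈ X'.filter (fun x => ¬ x ∈ Lv), G.degree x
        ≤ 2 * #(X'.filter (fun x => ¬ x ∈ Lv)) := by
      calc ∑ x ∈ X'.filter (fun x => ¬ x ∈ Lv), G.degree x
          ≤ ∑ _x ∈ X'.filter (fun x => ¬ x ∈ Lv), 2 := by
            apply Finset.sum_le_sum
            intro x hx
            rw [Finset.mem_filter, hX'def, Finset.mem_filter] at hx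
            omega
        _ = 2 * #(X'.filter (fun x => ¬ x ∈ Lv)) := by
            rw [Finset.sum_const, smul_eq_mul, mul_comm]
    have hc1 : Hs.card + X'.card = X.card := by
      rw [hHsdef, hX'def]
      exact Finset.card_filter_add_card_filter_not _
    have hc2 : Lv.card + #(X'.filter (fun x => ¬ x ∈ Lv)) = X'.card := by
      have := Finset.card_filter_add_card_filter_not (s := X') (p := (· ∈ Lv))
      rw [hfLv] at this
      exact this
    omega
  set nbP : V → Finset V := fun v => (G.neighborFinset v).filter (· ∈ Pf) with hnbPdef
  set nbX : V → Finset V := fun v => (G.neighborFinset v).filter (fun x => ¬ x ∈ Pf) with hnbXdef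
  have hnbPmem : ∀ v w, w ∈ nbP v ↔ G.Adj v w ∧ w ∈ Pf := by
    intro v w; rw [hnbPdef]; simp [mem_neighborFinset]
  have hnbXmem : ∀ v w, w ∈ nbX v ↔ G.Adj v w ∧ w ∉ Pf := by
    intro v w; rw [hnbXdef]; simp [mem_neighborFinset]
  have hdegsplit : ∀ v : V, G.degree v = #(nbP v) + #(nbX v) := by
    intro v
    rw [hnbPdef, hnbXdef, show G.degree v = #(G.neighborFinset v) from rfl]
    exact (Finset.card_filter_add_card_filter_not _).symm
  have hnbXa : #(nbX a) = 0 := by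
    rw [Finset.card_eq_zero, Finset.eq_empty_iff_forall_notMem]
    intro w hw
    rw [hnbXmem] at hw
    exact hS1a w hw.2 hw.1.symm
  have hnbXe : #(nbX e) = 0 := by
    rw [Finset.card_eq_zero, Finset.eq_empty_iff_forall_notMem]
    intro w hw
    rw [hnbXmem] at hw
    exact hS1e w hw.2 hw.1.symm
  have hcross : #(nbX b) + (#(nbX c) + #(nbX d)) ≤ 2 * X.card := by
    have hfe : ∀ v : V, nbX v = X.filter (fun x => G.Adj v x) := by
      intro v
      ext w
      rw [hnbXmem, Finset.mem_filter, hXdef]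
      simp [and_comm]
    have hb : #(nbX b) = ∑ x ∈ X, (if G.Adj b x then 1 else 0) := by
      rw [hfe b, Finset.card_filter]
    have hc : #(nbX c) = ∑ x ∈ X, (if G.Adj c x then 1 else 0) := by
      rw [hfe c, Finset.card_filter]
    have hd : #(nbX d) = ∑ x ∈ X, (if G.Adj d x then 1 else 0) := by
      rw [hfe d, Finset.card_filter]
    rw [hb, hc, hd, ← Finset.sum_add_distrib, ← Finset.sum_add_distrib]
    calc ∑ x ∈ X, ((if G.Adj b x then 1 else 0)
          + ((if G.Adj c x then 1 else 0) + (if G.Adj d x then 1 else 0)))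
        ≤ ∑ _x ∈ X, 2 := by
          apply Finset.sum_le_sum
          intro x hx
          have hxPf := (hXmem x).mp hx
          by_cases h2 : G.Adj c x
          · by_cases h1 : G.Adj b x
            · exact absurd ⟨h1.symm, h2.symm⟩ (hS2bc x hxPf)
            · by_cases h3 : G.Adj d x
              · exact absurd ⟨h2.symm, h3.symm⟩ (hS2cd x hxPf)
              · simp [h1, h2, h3]
          · split_ifs <;> omega
      _ = 2 * X.card := by rw [Finset.sum_const, smul_eq_mul, mul_comm]
  have hnbP4 : ∀ v, v ∈ Pf → #(nbP v) ≤ 4 := by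
    intro v hv
    have hsub : nbP v ⊆ Pf.erase v := by
      intro w hw
      rw [hnbPmem] at hw
      rw [Finset.mem_erase]
      exact ⟨hw.1.ne', hw.2⟩
    calc #(nbP v) ≤ #(Pf.erase v) := Finset.card_le_card hsub
      _ = 4 := by rw [Finset.card_erase_of_mem hv, hcard5]
  have hnbP_cases : ∀ v w, w ∈ nbP v → G.Adj v w ∧ (w = a ∨ w = b ∨ w = c ∨ w = d ∨ w = e) := by
    intro v w hw
    rw [hnbPmem] at hw
    exact ⟨hw.1, by simpa [hPfdef] using hw.2⟩
  have hcard1 : ∀ x : V, #({x} : Finset V) ≤ 1 := fun x => by simp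
  have hcard2 : ∀ x y : V, #({x, y} : Finset V) ≤ 2 :=
    fun x y => (Finset.card_insert_le _ _).trans (by simp)
  have hcard3 : ∀ x y z : V, #({x, y, z} : Finset V) ≤ 3 :=
    fun x y z => (Finset.card_insert_le _ _).trans
      (Nat.add_le_add_right ((Finset.card_insert_le _ _).trans (by simp)) 1)
  have hPart2 : #(nbP a) + (#(nbP b) + (#(nbP c) + (#(nbP d) + #(nbP e)))) ≤ 14 := by
    obtain ⟨x, hxPf, hxcase⟩ := hConnNbr
    obtain ⟨hx1, hx2, hx3, hx4, hx5⟩ := (hmem x).mp hxPf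
    have hb4 := hnbP4 b hbPf
    have hc4 := hnbP4 c hcPf
    have hd4 := hnbP4 d hdPf
    rcases hxcase with hxb | hxc | hxd
    · -- some outside vertex adjacent to b
      have hac' : ¬ G.Adj a c := fun hh =>
        hno (hl6 hxb hab.symm hh hcd hde hx1 hx3 hx4 hx5 hbc.ne hbd hbe had hae hce)
      have hae' : ¬ G.Adj a e := fun hh =>
        hno (hl6 hxb hab.symm hh hde.symm hcd.symm hx1 hx5 hx4 hx3 hbe hbd hbc.ne had hac hce.symm)
      have hadce : ¬ (G.Adj a d ∧ G.Adj c e) := fun hh =>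
        hno (hl6 hxb hab.symm hh.1 hcd.symm hh.2 hx1 hx4 hx3 hx5 hbd hbc.ne hbe hac hae hde.ne)
      by_cases hAD : G.Adj a d
      · have hCE : ¬ G.Adj c e := fun hh => hadce ⟨hAD, hh⟩
        have ha' : #(nbP a) ≤ 2 := by
          refine (Finset.card_le_card ?_).trans (hcard2 b d)
          intro w hw
          obtain ⟨haw, hwc⟩ := hnbP_cases a w hw
          simp only [Finset.mem_insert, Finset.mem_singleton]
          rcases hwc with rfl | rfl | rfl | rfl | rfl
          · exact absurd rfl haw.ne
          · exact Or.inl rfl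
          · exact absurd haw hac'
          · exact Or.inr rfl
          · exact absurd haw hae'
        have hc' : #(nbP c) ≤ 2 := by
          refine (Finset.card_le_card ?_).trans (hcard2 b d)
          intro w hw
          obtain ⟨haw, hwc⟩ := hnbP_cases c w hw
          simp only [Finset.mem_insert, Finset.mem_singleton]
          rcases hwc with rfl | rfl | rfl | rfl | rfl
          · exact absurd haw.symm hac'
          · exact Or.inl rfl
          · exact absurd rfl haw.ne
          · exact Or.inr rfl
          · exact absurd haw hCE
        have he' : #(nbP e) ≤ 2 := by
          refine (Finset.card_le_card ?_).trans (hcard2 b d)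
          intro w hw
          obtain ⟨haw, hwc⟩ := hnbP_cases e w hw
          simp only [Finset.mem_insert, Finset.mem_singleton]
          rcases hwc with rfl | rfl | rfl | rfl | rfl
          · exact absurd haw.symm hae'
          · exact Or.inl rfl
          · exact absurd haw.symm hCE
          · exact Or.inr rfl
          · exact absurd rfl haw.ne
        omega
      · have ha' : #(nbP a) ≤ 1 := by
          refine (Finset.card_le_card ?_).trans (hcard1 b)
          intro w hw
          obtain ⟨haw, hwc⟩ := hnbP_cases a w hw
          simp only [Finset.mem_singleton]
          rcases hwc with rfl | rfl | rfl | rfl | rfl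
          · exact absurd rfl haw.ne
          · rfl
          · exact absurd haw hac'
          · exact absurd haw hAD
          · exact absurd haw hae'
        have hc' : #(nbP c) ≤ 3 := by
          refine (Finset.card_le_card ?_).trans (hcard3 b d e)
          intro w hw
          obtain ⟨haw, hwc⟩ := hnbP_cases c w hw
          simp only [Finset.mem_insert, Finset.mem_singleton]
          rcases hwc with rfl | rfl | rfl | rfl | rfl
          · exact absurd haw.symm hac'
          · exact Or.inl rfl
          · exact absurd rfl haw.ne
          · exact Or.inr (Or.inl rfl)
          · exact Or.inr (Or.inr rfl)
        have hd' : #(nbP d) ≤ 3 := by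
          refine (Finset.card_le_card ?_).trans (hcard3 b c e)
          intro w hw
          obtain ⟨haw, hwc⟩ := hnbP_cases d w hw
          simp only [Finset.mem_insert, Finset.mem_singleton]
          rcases hwc with rfl | rfl | rfl | rfl | rfl
          · exact absurd haw.symm hAD
          · exact Or.inl rfl
          · exact Or.inr (Or.inl rfl)
          · exact absurd rfl haw.ne
          · exact Or.inr (Or.inr rfl)
        have he' : #(nbP e) ≤ 3 := by
          refine (Finset.card_le_card ?_).trans (hcard3 b c d)
          intro w hw
          obtain ⟨haw, hwc⟩ := hnbP_cases e w hw
          simp only [Finset.mem_insert, Finset.mem_singleton]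
          rcases hwc with rfl | rfl | rfl | rfl | rfl
          · exact absurd haw.symm hae'
          · exact Or.inl rfl
          · exact Or.inr (Or.inl rfl)
          · exact Or.inr (Or.inr rfl)
          · exact absurd rfl haw.ne
        omega
    · -- some outside vertex adjacent to c
      have hae' : ¬ G.Adj a e := fun hh =>
        hno (hl6 hxc hbc.symm hab.symm hh hde.symm hx2 hx1 hx5 hx4 hac.symm hce hcd.ne hbe hbd had)
      have hbe' : ¬ G.Adj b e := fun hh =>
        hno (hl6 hxc hcd hde hh.symm hab.symm hx4 hx5 hx2 hx1 hce hbc.ne' hac.symm hbd.symm had.symm hae.symm)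
      have had' : ¬ G.Adj a d := fun hh =>
        hno (hl6 hxc hbc.symm hab.symm hh hde hx2 hx1 hx4 hx5 hac.symm hcd.ne hce hbd hbe hae)
      have ha' : #(nbP a) ≤ 2 := by
        refine (Finset.card_le_card ?_).trans (hcard2 b c)
        intro w hw
        obtain ⟨haw, hwc⟩ := hnbP_cases a w hw
        simp only [Finset.mem_insert, Finset.mem_singleton]
        rcases hwc with rfl | rfl | rfl | rfl | rfl
        · exact absurd rfl haw.ne
        · exact Or.inl rfl
        · exact Or.inr rfl
        · exact absurd haw had'
        · exact absurd haw hae'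
      have hb' : #(nbP b) ≤ 3 := by
        refine (Finset.card_le_card ?_).trans (hcard3 a c d)
        intro w hw
        obtain ⟨haw, hwc⟩ := hnbP_cases b w hw
        simp only [Finset.mem_insert, Finset.mem_singleton]
        rcases hwc with rfl | rfl | rfl | rfl | rfl
        · exact Or.inl rfl
        · exact absurd rfl haw.ne
        · exact Or.inr (Or.inl rfl)
        · exact Or.inr (Or.inr rfl)
        · exact absurd haw hbe'
      have hd' : #(nbP d) ≤ 3 := by
        refine (Finset.card_le_card ?_).trans (hcard3 b c e)
        intro w hw
        obtain ⟨haw, hwc⟩ := hnbP_cases d w hw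
        simp only [Finset.mem_insert, Finset.mem_singleton]
        rcases hwc with rfl | rfl | rfl | rfl | rfl
        · exact absurd haw.symm had'
        · exact Or.inl rfl
        · exact Or.inr (Or.inl rfl)
        · exact absurd rfl haw.ne
        · exact Or.inr (Or.inr rfl)
      have he' : #(nbP e) ≤ 2 := by
        refine (Finset.card_le_card ?_).trans (hcard2 c d)
        intro w hw
        obtain ⟨haw, hwc⟩ := hnbP_cases e w hw
        simp only [Finset.mem_insert, Finset.mem_singleton]
        rcases hwc with rfl | rfl | rfl | rfl | rfl
        · exact absurd haw.symm hae'
        · exact absurd haw.symm hbe'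
        · exact Or.inl rfl
        · exact Or.inr rfl
        · exact absurd rfl haw.ne
      omega
    · -- some outside vertex adjacent to d
      have hce' : ¬ G.Adj c e := fun hh =>
        hno (hl6 hxd hde hh.symm hbc.symm hab.symm hx5 hx3 hx2 hx1 hcd.ne' hbd.symm had.symm hbe.symm hae.symm hac.symm)
      have hae' : ¬ G.Adj a e := fun hh =>
        hno (hl6 hxd hde hh.symm hab hbc hx5 hx1 hx2 hx3 had.symm hbd.symm hcd.ne' hbe.symm hce.symm hac)
      have hbeac : ¬ (G.Adj b e ∧ G.Adj a c) := fun hh =>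
        hno (hl6 hxd hde hh.1.symm hbc hh.2.symm hx5 hx2 hx3 hx1 hbd.symm hcd.ne' had.symm hce.symm hae.symm hab.ne')
      by_cases hBE : G.Adj b e
      · have hAC : ¬ G.Adj a c := fun hh => hbeac ⟨hBE, hh⟩
        have ha' : #(nbP a) ≤ 2 := by
          refine (Finset.card_le_card ?_).trans (hcard2 b d)
          intro w hw
          obtain ⟨haw, hwc⟩ := hnbP_cases a w hw
          simp only [Finset.mem_insert, Finset.mem_singleton]
          rcases hwc with rfl | rfl | rfl | rfl | rfl
          · exact absurd rfl haw.ne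
          · exact Or.inl rfl
          · exact absurd haw hAC
          · exact Or.inr rfl
          · exact absurd haw hae'
        have hc' : #(nbP c) ≤ 2 := by
          refine (Finset.card_le_card ?_).trans (hcard2 b d)
          intro w hw
          obtain ⟨haw, hwc⟩ := hnbP_cases c w hw
          simp only [Finset.mem_insert, Finset.mem_singleton]
          rcases hwc with rfl | rfl | rfl | rfl | rfl
          · exact absurd haw.symm hAC
          · exact Or.inl rfl
          · exact absurd rfl haw.ne
          · exact Or.inr rfl
          · exact absurd haw hce'
        have he' : #(nbP e) ≤ 2 := by
          refine (Finset.card_le_card ?_).trans (hcard2 b d)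
          intro w hw
          obtain ⟨haw, hwc⟩ := hnbP_cases e w hw
          simp only [Finset.mem_insert, Finset.mem_singleton]
          rcases hwc with rfl | rfl | rfl | rfl | rfl
          · exact absurd haw.symm hae'
          · exact Or.inl rfl
          · exact absurd haw.symm hce'
          · exact Or.inr rfl
          · exact absurd rfl haw.ne
        omega
      · have ha' : #(nbP a) ≤ 3 := by
          refine (Finset.card_le_card ?_).trans (hcard3 b c d)
          intro w hw
          obtain ⟨haw, hwc⟩ := hnbP_cases a w hw
          simp only [Finset.mem_insert, Finset.mem_singleton]
          rcases hwc with rfl | rfl | rfl | rfl | rfl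
          · exact absurd rfl haw.ne
          · exact Or.inl rfl
          · exact Or.inr (Or.inl rfl)
          · exact Or.inr (Or.inr rfl)
          · exact absurd haw hae'
        have hb' : #(nbP b) ≤ 3 := by
          refine (Finset.card_le_card ?_).trans (hcard3 a c d)
          intro w hw
          obtain ⟨haw, hwc⟩ := hnbP_cases b w hw
          simp only [Finset.mem_insert, Finset.mem_singleton]
          rcases hwc with rfl | rfl | rfl | rfl | rfl
          · exact Or.inl rfl
          · exact absurd rfl haw.ne
          · exact Or.inr (Or.inl rfl)
          · exact Or.inr (Or.inr rfl)
          · exact absurd haw hBE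
        have hc' : #(nbP c) ≤ 3 := by
          refine (Finset.card_le_card ?_).trans (hcard3 a b d)
          intro w hw
          obtain ⟨haw, hwc⟩ := hnbP_cases c w hw
          simp only [Finset.mem_insert, Finset.mem_singleton]
          rcases hwc with rfl | rfl | rfl | rfl | rfl
          · exact Or.inl rfl
          · exact Or.inr (Or.inl rfl)
          · exact absurd rfl haw.ne
          · exact Or.inr (Or.inr rfl)
          · exact absurd haw hce'
        have he' : #(nbP e) ≤ 1 := by
          refine (Finset.card_le_card ?_).trans (hcard1 d)
          intro w hw
          obtain ⟨haw, hwc⟩ := hnbP_cases e w hw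
          simp only [Finset.mem_singleton]
          rcases hwc with rfl | rfl | rfl | rfl | rfl
          · exact absurd haw.symm hae'
          · exact absurd haw.symm hBE
          · exact absurd haw.symm hce'
          · rfl
          · exact absurd rfl haw.ne
        omega
  -- final assembly
  have hsplitU : ∑ v ∈ univ.filter (· ∈ Pf), G.degree v
      + ∑ v ∈ univ.filter (fun x => ¬ x ∈ Pf), G.degree v = ∑ v, G.degree v := by
    exact Finset.sum_filter_add_sum_filter_not univ (· ∈ Pf) (fun v => G.degree v)
  have hfPf : univ.filter (· ∈ Pf) = Pf := by ext z; simp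
  have hXf : univ.filter (fun x : V => ¬ x ∈ Pf) = X := by ext z; simp [hXdef]
  have hsumPf : ∑ v ∈ Pf, G.degree v
      = G.degree a + (G.degree b + (G.degree c + (G.degree d + G.degree e))) := by
    rw [hPfdef]
    rw [Finset.sum_insert (by simp [hab.ne, hac, had, hae]),
      Finset.sum_insert (by simp [hbc.ne, hbd, hbe]),
      Finset.sum_insert (by simp [hcd.ne, hce]),
      Finset.sum_insert (by simp [hde.ne]), Finset.sum_singleton]
  rw [← hsplitU, hfPf, hXf, hsumPf, hdegsplit a, hdegsplit b, hdegsplit c, hdegsplit d,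
    hdegsplit e]
  omega

lemma conn_bound (hconn : G.Preconnected) (hcard : 6 ≤ Fintype.card V)
    (h6 : ¬ HasList G 6) : #G.edgeFinset ≤ 2 * Fintype.card V - 3 := by
  have hhs := G.sum_degrees_eq_twice_card_edges
  by_cases h5 : HasList G 5
  · obtain ⟨l, hc, hn, hl⟩ := h5
    obtain ⟨a, b, c, d, e, rfl⟩ := list5 hl
    simp only [List.isChain_cons_cons, List.isChain_singleton, and_true] at hc
    simp only [List.nodup_cons, List.mem_cons, List.mem_singleton, List.not_mem_nil, or_false,
      not_or, List.nodup_nil, and_true] at hn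
    have := case5 hconn hc.1 hc.2.1 hc.2.2.1 hc.2.2.2 hn.1.2.1 hn.1.2.2.1 hn.1.2.2.2
      hn.2.1.2.1 hn.2.1.2.2 hn.2.2.1.2 h6 hcard
    omega
  by_cases h4 : HasList G 4
  · obtain ⟨l, hc, hn, hl⟩ := h4
    obtain ⟨a, b, c, d, rfl⟩ := list4 hl
    simp only [List.isChain_cons_cons, List.isChain_singleton, and_true] at hc
    simp only [List.nodup_cons, List.mem_cons, List.mem_singleton, List.not_mem_nil, or_false,
      not_or, List.nodup_nil, and_true] at hn
    have := case4 hconn hc.1 hc.2.1 hc.2.2 hn.1.2.1 hn.1.2.2 hn.2.1.2 h5 (by omega)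
    omega
  by_cases h3 : HasList G 3
  · obtain ⟨l, hc, hn, hl⟩ := h3
    obtain ⟨a, b, c, rfl⟩ := list3 hl
    simp only [List.isChain_cons_cons, List.isChain_singleton, and_true] at hc
    simp only [List.nodup_cons, List.mem_cons, List.mem_singleton, List.not_mem_nil, or_false,
      not_or, List.nodup_nil, and_true] at hn
    have := case3 hconn hc.1 hc.2 hn.1.2 h4 (by omega)
    omega
  · exfalso
    have hadj : ∀ u v : V, u ≠ v → G.Adj u v := by
      intro u v huv
      obtain ⟨w⟩ := hconn u v
      have hp := w.bypass_isPath
      have hlen : w.bypass.support.length ≤ 2 := by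
        by_contra hcon
        exact h3 (hasList_of_walk w.bypass hp (by omega))
      clear hhs
      generalize hq : w.bypass = q at hp hlen
      cases q with
      | nil => exact absurd rfl huv
      | @cons _ x _ hux p =>
        have hplen : p.length = 0 := by
          have h' := p.length_support
          simp only [Walk.support_cons, List.length_cons] at hlen
          omega
        exact (p.eq_of_length_eq_zero hplen) ▸ hux
    obtain ⟨u, v, huv⟩ := Fintype.exists_pair_of_one_lt_card (α := V) (by omega)
    obtain ⟨z, hz⟩ : ∃ z, z ∉ ({u, v} : Finset V) := by
      by_contra hcon
      push_neg at hcon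
      have h1 : (univ : Finset V).card ≤ #({u, v} : Finset V) :=
        Finset.card_le_card (fun z _ => hcon z)
      have h2 : #({u, v} : Finset V) ≤ 2 := (Finset.card_insert_le _ _).trans (by simp)
      rw [Finset.card_univ] at h1
      omega
    simp only [Finset.mem_insert, Finset.mem_singleton, not_or] at hz
    refine h3 ⟨[u, v, z], ?_, ?_, rfl⟩
    · simp [List.isChain_cons_cons, hadj u v huv, hadj v z (Ne.symm hz.2)]
    · simp [huv, Ne.symm hz.1, Ne.symm hz.2]

end CaseLemmas

lemma hasList_induce {S : Set V} {k : ℕ} (h : HasList (G.induce S) k) : HasList G k := by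
  obtain ⟨l, hc, hn, hl⟩ := h
  refine ⟨l.map Subtype.val, ?_, hn.map Subtype.val_injective, by simp [hl]⟩
  rw [List.isChain_map]
  exact hc.imp (fun _ _ h => h)

lemma degree_induce [Fintype V] [DecidableEq V] [DecidableRel G.Adj] {S : Set V}
    [DecidablePred (· ∈ S)] [Fintype ↥S] [DecidableRel (G.induce S).Adj]
    (hS : ∀ a b, G.Adj a b → a ∈ S → b ∈ S) (v : ↥S) :
    (G.induce S).degree v = G.degree v.val := by
  refine Finset.card_bij (fun w _ => w.val) ?_ ?_ ?_
  · intro w hw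
    rw [mem_neighborFinset] at hw ⊢
    exact hw
  · intro w1 _ w2 _ he
    exact Subtype.ext he
  · intro w hw
    rw [mem_neighborFinset] at hw
    have hwS : w ∈ S := hS v.val w hw v.property
    exact ⟨⟨w, hwS⟩, by rw [mem_neighborFinset]; exact hw, rfl⟩

lemma UB : ∀ (n : ℕ), ∀ (V : Type) (_ : Fintype V) (G : SimpleGraph V),
    Fintype.card V = n → ¬ HasList G 6 → G.edgeSet.ncard ≤ Tgt n := by
  intro n
  induction n using Nat.strong_induction_on with
  | _ n ih =>
    intro V _ G hcard h6
    classical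
    have hnc : G.edgeSet.ncard = #G.edgeFinset := by
      rw [← coe_edgeFinset, Set.ncard_coe_finset]
    by_cases hle : n ≤ 5
    · rw [hnc]
      calc #G.edgeFinset ≤ (Fintype.card V).choose 2 := G.card_edgeFinset_le_card_choose_two
        _ ≤ Tgt n := by rw [hcard]; exact tgt_small n hle
    by_cases hpre : G.Preconnected
    · rw [hnc]
      calc #G.edgeFinset ≤ 2 * Fintype.card V - 3 :=
          conn_bound hpre (by omega) h6
        _ ≤ Tgt n := by rw [hcard]; exact tgt_ge n (by omega)
    · rw [Preconnected] at hpre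
      push_neg at hpre
      obtain ⟨u, v, huv⟩ := hpre
      set S : Set V := {w | G.Reachable u w} with hSdef
      have hScl : ∀ a b, G.Adj a b → a ∈ S → b ∈ S := by
        intro a b hab ha
        exact ha.trans hab.reachable
      have hSccl : ∀ a b, G.Adj a b → a ∈ Sᶜ → b ∈ Sᶜ := by
        intro a b hab ha hb
        exact ha (Set.mem_setOf_eq ▸ (hb.trans hab.symm.reachable))
      have huS : u ∈ S := Set.mem_setOf_eq ▸ Reachable.refl u
      have hvS : v ∈ Sᶜ := huv
      -- cardinalities
      set na := Fintype.card ↥S with hna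
      set nb := Fintype.card ↥(Sᶜ) with hnb
      have hfc : univ.filter (fun x : V => ¬ x ∈ S) = univ.filter (· ∈ Sᶜ) := by
        ext z
        simp
      have hcards : na + nb = n := by
        have h1 : na = #(univ.filter (· ∈ S)) := by rw [hna, Fintype.card_subtype]
        have h2 : nb = #(univ.filter (· ∈ Sᶜ)) := by rw [hnb, Fintype.card_subtype]
        have h3 := Finset.card_filter_add_card_filter_not
          (s := (univ : Finset V)) (p := (· ∈ S))
        rw [Finset.card_univ, hcard, hfc] at h3
        omega
      have hna1 : 1 ≤ na := Fintype.card_pos_iff.mpr ⟨⟨u, huS⟩⟩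
      have hnb1 : 1 ≤ nb := Fintype.card_pos_iff.mpr ⟨⟨v, hvS⟩⟩
      -- no-P6 passes to induced subgraphs
      have h6S : ¬ HasList (G.induce S) 6 := fun h => h6 (hasList_induce h)
      have h6Sc : ¬ HasList (G.induce Sᶜ) 6 := fun h => h6 (hasList_induce h)
      have hES := ih na (by omega) ↥S _ (G.induce S) rfl h6S
      have hESc := ih nb (by omega) ↥(Sᶜ) _ (G.induce Sᶜ) rfl h6Sc
      -- edge count splits
      have hsum1 : ∑ w : ↥S, (G.induce S).degree w = ∑ w ∈ univ.filter (· ∈ S), G.degree w := by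
        rw [Finset.sum_subtype (p := (· ∈ S)) (univ.filter (· ∈ S)) (by simp) (fun w => G.degree w)]
        exact Finset.sum_congr rfl (fun w _ => degree_induce hScl w)
      have hsum2 : ∑ w : ↥(Sᶜ), (G.induce Sᶜ).degree w
          = ∑ w ∈ univ.filter (· ∈ Sᶜ), G.degree w := by
        rw [Finset.sum_subtype (p := (· ∈ Sᶜ)) (univ.filter (· ∈ Sᶜ)) (by simp) (fun w => G.degree w)]
        exact Finset.sum_congr rfl (fun w _ => degree_induce hSccl w)
      have hsplit : ∑ w ∈ univ.filter (· ∈ S), G.degree w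
          + ∑ w ∈ univ.filter (fun x => ¬ x ∈ S), G.degree w = ∑ w, G.degree w :=
        Finset.sum_filter_add_sum_filter_not univ (· ∈ S) (fun w => G.degree w)
      have hd1 := G.sum_degrees_eq_twice_card_edges
      have hd2 := (G.induce S).sum_degrees_eq_twice_card_edges
      have hd3 := (G.induce Sᶜ).sum_degrees_eq_twice_card_edges
      have hncS : (G.induce S).edgeSet.ncard = #(G.induce S).edgeFinset := by
        rw [← coe_edgeFinset, Set.ncard_coe_finset]
      have hncSc : (G.induce Sᶜ).edgeSet.ncard = #(G.induce Sᶜ).edgeFinset := by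
        rw [← coe_edgeFinset, Set.ncard_coe_finset]
      have hsuper := tgt_superadd hna1 hnb1
      rw [hcards] at hsuper
      rw [hfc] at hsplit
      rw [hnc]
      omega

def Gex (n : ℕ) : SimpleGraph (Fin n) :=
  SimpleGraph.fromRel (fun u v => (u : ℕ) / 5 = (v : ℕ) / 5)

lemma noP6 (n : ℕ) : ¬ Contains (Gex n) (SimpleGraph.pathGraph 6) := by
  rintro ⟨f, hf⟩
  have hstep : ∀ (i j : Fin 6), (pathGraph 6).Adj i j → ((f i) : ℕ) / 5 = ((f j) : ℕ) / 5 := by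
    intro i j hij
    have hadj : (Gex n).Adj (f i) (f j) := f.map_rel hij
    simp only [Gex, SimpleGraph.fromRel_adj] at hadj
    rcases hadj.2 with h | h
    · exact h
    · exact h.symm
  have h01 := hstep 0 1 (by rw [pathGraph_adj]; left; rfl)
  have h12 := hstep 1 2 (by rw [pathGraph_adj]; left; rfl)
  have h23 := hstep 2 3 (by rw [pathGraph_adj]; left; rfl)
  have h34 := hstep 3 4 (by rw [pathGraph_adj]; left; rfl)
  have h45 := hstep 4 5 (by rw [pathGraph_adj]; left; rfl)
  set B := ((f 0) : ℕ) / 5 with hB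
  have himg : #(univ.image f) = 6 := by
    rw [Finset.card_image_of_injective _ hf, Finset.card_univ, Fintype.card_fin]
  have hsub : univ.image f ⊆ univ.filter (fun v : Fin n => (v : ℕ) / 5 = B) := by
    intro w hw
    rw [Finset.mem_image] at hw
    obtain ⟨i, _, rfl⟩ := hw
    rw [Finset.mem_filter]
    refine ⟨Finset.mem_univ _, ?_⟩
    fin_cases i
    · show ((f 0 : Fin n) : ℕ) / 5 = B
      omega
    · show ((f 1 : Fin n) : ℕ) / 5 = B
      omega
    · show ((f 2 : Fin n) : ℕ) / 5 = B
      omega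
    · show ((f 3 : Fin n) : ℕ) / 5 = B
      omega
    · show ((f 4 : Fin n) : ℕ) / 5 = B
      omega
    · show ((f 5 : Fin n) : ℕ) / 5 = B
      omega
  have hblock : #(univ.filter (fun v : Fin n => (v : ℕ) / 5 = B)) ≤ 5 := by
    have hle5 : #(univ.filter (fun v : Fin n => (v : ℕ) / 5 = B)) ≤ #(Finset.range 5) := by
      refine Finset.card_le_card_of_injOn (fun v => (v : ℕ) % 5) ?_ ?_
      · intro v hv
        exact Finset.mem_range.mpr (Nat.mod_lt _ (by norm_num))
      · intro v1 h1 v2 h2 he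
        rw [Finset.mem_coe, Finset.mem_filter] at h1 h2
        have e1 := h1.2
        have e2 := h2.2
        apply Fin.ext
        simp only at he
        omega
    simpa using hle5
  have hle := Finset.card_le_card hsub
  omega

lemma card_fin_filter {n : ℕ} (p : ℕ → Prop) [DecidablePred p] :
    #(univ.filter (fun v : Fin n => p v.val)) = #((Finset.range n).filter p) := by
  refine Finset.card_bij (fun v _ => v.val) ?_ ?_ ?_
  · intro v hv
    rw [Finset.mem_filter] at hv ⊢
    exact ⟨Finset.mem_range.mpr v.isLt, hv.2⟩
  · intro v1 _ v2 _ h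
    exact Fin.ext h
  · intro w hw
    rw [Finset.mem_filter, Finset.mem_range] at hw
    exact ⟨⟨w, hw.1⟩, by simp [hw.2], rfl⟩

lemma sum_g : ∀ n : ℕ, ∑ i ∈ Finset.range n, (min n (5*(i/5)+5) - 5*(i/5) - 1) = 2 * Tgt n := by
  intro n
  induction n with
  | zero => simp [Tgt]
  | succ n ihn =>
    rw [Finset.sum_range_succ]
    have hstep : ∀ i ∈ Finset.range n, min (n+1) (5*(i/5)+5) - 5*(i/5) - 1
        = (min n (5*(i/5)+5) - 5*(i/5) - 1) + (if i/5 = n/5 then 1 else 0) := by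
      intro i hi
      rw [Finset.mem_range] at hi
      simp only [Nat.min_def]
      split_ifs <;> omega
    rw [Finset.sum_congr rfl hstep, Finset.sum_add_distrib, ihn]
    have hcount : ∑ i ∈ Finset.range n, (if i/5 = n/5 then 1 else 0) = n % 5 := by
      rw [← Finset.card_filter]
      have he : (Finset.range n).filter (fun i => i/5 = n/5) = Finset.Ico (5*(n/5)) n := by
        ext z
        rw [Finset.mem_filter, Finset.mem_range, Finset.mem_Ico]
        omega
      rw [he, Nat.card_Ico]
      omega
    have hlast : min (n+1) (5*(n/5)+5) - 5*(n/5) - 1 = n % 5 := by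
      simp only [Nat.min_def]
      split_ifs <;> omega
    rw [hcount, hlast, tgt_succ]
    omega

lemma countGex (n : ℕ) : (Gex n).edgeSet.ncard = Tgt n := by
  classical
  have hnc : (Gex n).edgeSet.ncard = #(Gex n).edgeFinset := by
    rw [← coe_edgeFinset, Set.ncard_coe_finset]
  have hhs := (Gex n).sum_degrees_eq_twice_card_edges
  have hdeg : ∀ v : Fin n, (Gex n).degree v = min n (5*((v:ℕ)/5)+5) - 5*((v:ℕ)/5) - 1 := by
    intro v
    have hnb : (Gex n).neighborFinset v
        = (univ.filter (fun u : Fin n => (u:ℕ)/5 = (v:ℕ)/5)).erase v := by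
      ext u
      rw [mem_neighborFinset, Finset.mem_erase, Finset.mem_filter]
      rw [Gex, SimpleGraph.fromRel_adj]
      constructor
      · rintro ⟨hne, h | h⟩
        · exact ⟨fun hc => hne hc.symm, Finset.mem_univ u, h.symm⟩
        · exact ⟨fun hc => hne hc.symm, Finset.mem_univ u, h⟩
      · rintro ⟨hne, _, h⟩
        exact ⟨fun hc => hne hc.symm, Or.inr h⟩
    have hblk : #(univ.filter (fun u : Fin n => (u:ℕ)/5 = (v:ℕ)/5))
        = min n (5*((v:ℕ)/5)+5) - 5*((v:ℕ)/5) := by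
      rw [card_fin_filter (fun u => u/5 = (v:ℕ)/5)]
      have he : (Finset.range n).filter (fun u => u/5 = (v:ℕ)/5)
          = Finset.Ico (5*((v:ℕ)/5)) (min n (5*((v:ℕ)/5)+5)) := by
        ext z
        rw [Finset.mem_filter, Finset.mem_range, Finset.mem_Ico]
        have := v.isLt
        omega
      rw [he, Nat.card_Ico]
    have hvmem : v ∈ univ.filter (fun u : Fin n => (u:ℕ)/5 = (v:ℕ)/5) := by simp
    rw [SimpleGraph.degree, hnb, Finset.card_erase_of_mem hvmem, hblk]
  have hsum : ∑ v : Fin n, (Gex n).degree v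
      = ∑ i ∈ Finset.range n, (min n (5*(i/5)+5) - 5*(i/5) - 1) := by
    rw [← Fin.sum_univ_eq_sum_range (fun i => min n (5*(i/5)+5) - 5*(i/5) - 1) n]
    exact Finset.sum_congr rfl (fun v _ => hdeg v)
  have := sum_g n
  omega


theorem extremal_number_P6 (n : ℕ) (hn : 3 ≤ n) :
    IsGreatest {m | ∃ G : SimpleGraph (Fin n),
        ¬ Contains G (SimpleGraph.pathGraph 6) ∧ G.edgeSet.ncard = m}
      (if n % 5 = 0 then 2 * n
       else if n % 5 = 1 ∨ n % 5 = 4 then 2 * n - 2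
       else 2 * n - 3) := by
  show IsGreatest _ (Tgt n)
  constructor
  · exact ⟨Gex n, noP6 n, countGex n⟩
  · rintro m ⟨G, hG, rfl⟩
    exact UB n (Fin n) inferInstance G (by simp) (fun h => hG (contains_of_hasList h))
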